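/- Let κ ≥ 0 and p, w ∈ ℝ⁴ with ⟨p,p⟩ = 0, ⟨p,w⟩ = 0 and ⟨w,w⟩ = −κ². On the open set Ω = {e ∈ ℝ⁴ : ⟨e,p⟩ ≠ 0} define the smooth function ũ(e) := exp(−i·⟨e,w⟩/⟨e,p⟩) ∈ ℂ. Then (i) the directional derivative of ũ along p vanishes: D_p ũ(e) = 0 for all e ∈ Ω; and (ii) ⟨e,p⟩² · □ũ(e) = κ² · ũ(e) for all e ∈ Ω, where □ := ∂²/∂(e⁰)² − ∂²/∂(e¹)² − ∂²/∂(e²)² − ∂²/∂(e³)² is the wave operator in the variable e. (The intertwiner identities (p∂_e)ũ = 0 and ((ep)²□_e − κ²)ũ = 0 proved for Proposition 2.2.) -/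

import Mathlib

noncomputable section

/-- Minkowski bilinear form on ℝ⁴. -/
def mink (a b : Fin 4 → ℝ) : ℝ := a 0 * b 0 - a 1 * b 1 - a 2 * b 2 - a 3 * b 3

/-- Directional derivative `D_v f(e) = (d/dt) f(e+tv)|_{t=0}`. -/
def Dv (v : Fin 4 → ℝ) (f : (Fin 4 → ℝ) → ℂ) (e : Fin 4 → ℝ) : ℂ :=
  deriv (fun t : ℝ => f (e + t • v)) 0

/-- Standard basis vector of ℝ⁴. -/
def bvec (μ : Fin 4) : Fin 4 → ℝ := fun i => if i = μ then 1 else 0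

/-- The wave operator `□ = ∂²₀ − ∂²₁ − ∂²₂ − ∂²₃` in the variable `e`. -/
def box (f : (Fin 4 → ℝ) → ℂ) (e : Fin 4 → ℝ) : ℂ :=
  Dv (bvec 0) (Dv (bvec 0) f) e - Dv (bvec 1) (Dv (bvec 1) f) e -
    Dv (bvec 2) (Dv (bvec 2) f) e - Dv (bvec 3) (Dv (bvec 3) f) e

lemma mink_add_smul (e v b : Fin 4 → ℝ) (t : ℝ) :
    mink (e + t • v) b = mink e b + t * mink v b := by
  simp [mink]; ring

lemma key (w p v e : Fin 4 → ℝ) (hC : mink e p ≠ 0) :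
    HasDerivAt (fun t : ℝ =>
        Complex.exp (-Complex.I * ((mink (e + t • v) w : ℝ) : ℂ) / ((mink (e + t • v) p : ℝ) : ℂ)))
      (Complex.exp (-Complex.I * ((mink e w : ℝ) : ℂ) / ((mink e p : ℝ) : ℂ)) *
        (-Complex.I * (((mink v w : ℝ) : ℂ) * ((mink e p : ℝ) : ℂ) -
            ((mink e w : ℝ) : ℂ) * ((mink v p : ℝ) : ℂ)) / ((mink e p : ℝ) : ℂ) ^ 2)) 0 := by
  set A : ℂ := ((mink e w : ℝ) : ℂ) with hA
  set B : ℂ := ((mink v w : ℝ) : ℂ) with hB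
  set C : ℂ := ((mink e p : ℝ) : ℂ) with hCdef
  set D : ℂ := ((mink v p : ℝ) : ℂ) with hD
  have hCc : C ≠ 0 := Complex.ofReal_ne_zero.mpr hC
  have hnum : HasDerivAt (fun z : ℂ => -Complex.I * (A + z * B)) (-Complex.I * B) 0 := by
    simpa using (((hasDerivAt_id (0 : ℂ)).mul_const B).const_add A).const_mul (-Complex.I)
  have hden : HasDerivAt (fun z : ℂ => C + z * D) D 0 := by
    simpa using ((hasDerivAt_id (0 : ℂ)).mul_const D).const_add C
  have h := ((hnum.div hden (by simpa using hCc)).cexp).comp_ofReal (z := 0)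
  have h2 : HasDerivAt (fun t : ℝ =>
      Complex.exp (-Complex.I * ((mink (e + t • v) w : ℝ) : ℂ) / ((mink (e + t • v) p : ℝ) : ℂ)))
      (Complex.exp (-Complex.I * (A + (0:ℂ) * B) / (C + (0:ℂ) * D)) *
        ((-Complex.I * B * (C + (0:ℂ) * D) - -Complex.I * (A + (0:ℂ) * B) * D) / (C + (0:ℂ) * D) ^ 2)) 0 := by
    convert h using 2 with t
    rw [mink_add_smul, mink_add_smul, hA, hB, hCdef, hD]
    push_cast
    simp only [Pi.div_apply]
    ring_nf
    simp only [Pi.div_apply]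
    ring_nf
  convert h2 using 1
  simp
  field_simp
  ring

lemma Dv_eq (w p v e : Fin 4 → ℝ) (hC : mink e p ≠ 0) :
    Dv v (fun e' => Complex.exp (-Complex.I * ((mink e' w : ℝ) : ℂ) / ((mink e' p : ℝ) : ℂ))) e =
      Complex.exp (-Complex.I * ((mink e w : ℝ) : ℂ) / ((mink e p : ℝ) : ℂ)) *
        (-Complex.I * (((mink v w : ℝ) : ℂ) * ((mink e p : ℝ) : ℂ) -
            ((mink e w : ℝ) : ℂ) * ((mink v p : ℝ) : ℂ)) / ((mink e p : ℝ) : ℂ) ^ 2) :=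
  (key w p v e hC).deriv

lemma key2 (w p v e : Fin 4 → ℝ) (hC : mink e p ≠ 0) :
    Dv v (Dv v (fun e' => Complex.exp (-Complex.I * ((mink e' w : ℝ) : ℂ) / ((mink e' p : ℝ) : ℂ)))) e =
      Complex.exp (-Complex.I * ((mink e w : ℝ) : ℂ) / ((mink e p : ℝ) : ℂ)) *
        ((-(((mink v w * mink e p - mink e w * mink v p : ℝ) : ℂ)) ^ 2 +
            2 * Complex.I * ((mink v w * mink e p - mink e w * mink v p : ℝ) : ℂ) *
              ((mink v p : ℝ) : ℂ) * ((mink e p : ℝ) : ℂ)) / ((mink e p : ℝ) : ℂ) ^ 4) := by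
  set A : ℂ := ((mink e w : ℝ) : ℂ) with hA
  set B : ℂ := ((mink v w : ℝ) : ℂ) with hB
  set C : ℂ := ((mink e p : ℝ) : ℂ) with hCdef
  set D : ℂ := ((mink v p : ℝ) : ℂ) with hD
  set K : ℂ := ((mink v w * mink e p - mink e w * mink v p : ℝ) : ℂ) with hK
  have hCc : C ≠ 0 := Complex.ofReal_ne_zero.mpr hC
  -- eventual nonvanishing of mink (e + t•v) p near 0
  have hcont : ContinuousAt (fun t : ℝ => mink (e + t • v) p) 0 := by
    have : (fun t : ℝ => mink (e + t • v) p) = fun t => mink e p + t * mink v p := by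
      funext t; rw [mink_add_smul]
    rw [this]
    fun_prop
  have hev : ∀ᶠ t in nhds (0 : ℝ), mink (e + t • v) p ≠ 0 :=
    hcont.eventually_ne (by simpa using hC)
  -- the inner Dv agrees near 0 with a nice function G
  have heq : (fun t : ℝ => Dv v (fun e' =>
        Complex.exp (-Complex.I * ((mink e' w : ℝ) : ℂ) / ((mink e' p : ℝ) : ℂ))) (e + t • v))
      =ᶠ[nhds (0:ℝ)] (fun t : ℝ =>
        Complex.exp (-Complex.I * ((mink (e + t • v) w : ℝ) : ℂ) / ((mink (e + t • v) p : ℝ) : ℂ)) *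
          (-Complex.I * K / ((mink (e + t • v) p : ℝ) : ℂ) ^ 2)) := by
    filter_upwards [hev] with t ht
    rw [Dv_eq w p v (e + t • v) ht]
    congr 1
    rw [mink_add_smul, mink_add_smul, hK]
    push_cast
    ring
  -- derivative of G at 0
  have hnum : HasDerivAt (fun z : ℂ => -Complex.I * (A + z * B)) (-Complex.I * B) 0 := by
    simpa using (((hasDerivAt_id (0 : ℂ)).mul_const B).const_add A).const_mul (-Complex.I)
  have hden : HasDerivAt (fun z : ℂ => C + z * D) D 0 := by
    simpa using ((hasDerivAt_id (0 : ℂ)).mul_const D).const_add C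
  have hexp := (hnum.div hden (by simpa using hCc)).cexp
  have hden2 : HasDerivAt (fun z : ℂ => (C + z * D) ^ 2) (2 * (C + 0 * D) ^ 1 * D) 0 := by
    simpa using hden.fun_pow 2
  have hGc := (hexp.mul_const (-Complex.I * K)).div hden2 (by simpa [pow_eq_zero_iff] using hCc)
  have hG := hGc.comp_ofReal (z := 0)
  have hG2 : HasDerivAt (fun t : ℝ =>
      Complex.exp (-Complex.I * ((mink (e + t • v) w : ℝ) : ℂ) / ((mink (e + t • v) p : ℝ) : ℂ)) *
        (-Complex.I * K / ((mink (e + t • v) p : ℝ) : ℂ) ^ 2))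
      (Complex.exp (-Complex.I * A / C) *
        ((-K ^ 2 + 2 * Complex.I * K * D * C) / C ^ 4)) 0 := by
    have hfun : (fun t : ℝ =>
        Complex.exp (-Complex.I * ((mink (e + t • v) w : ℝ) : ℂ) / ((mink (e + t • v) p : ℝ) : ℂ)) *
          (-Complex.I * K / ((mink (e + t • v) p : ℝ) : ℂ) ^ 2)) =
        (fun t : ℝ => Complex.exp (-Complex.I * (A + (t:ℂ) * B) / (C + (t:ℂ) * D)) * (-Complex.I * K) /
          (C + (t:ℂ) * D) ^ 2) := by
      funext t
      rw [mink_add_smul, mink_add_smul, hA, hB, hCdef, hD]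
      push_cast
      ring
    rw [hfun]
    have hK2 : K = B * C - A * D := by rw [hK, hA, hB, hCdef, hD]; push_cast; ring
    convert hG using 1
    · rfl
    rw [hK2]
    simp only [zero_mul, add_zero, mul_zero, pow_one, Pi.div_apply]
    field_simp
    ring_nf
    simp only [Complex.I_sq]
    ring
  rw [show Dv v (Dv v (fun e' =>
      Complex.exp (-Complex.I * ((mink e' w : ℝ) : ℂ) / ((mink e' p : ℝ) : ℂ)))) e =
      deriv (fun t : ℝ => Dv v (fun e' =>
        Complex.exp (-Complex.I * ((mink e' w : ℝ) : ℂ) / ((mink e' p : ℝ) : ℂ))) (e + t • v)) 0 from rfl,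
    heq.deriv_eq, hG2.deriv]


lemma mb0 (b : Fin 4 → ℝ) : mink (bvec 0) b = b 0 := by
  simp [mink, bvec, show (0:Fin 4) ≠ 1 by decide, show (0:Fin 4) ≠ 2 by decide,
    show (0:Fin 4) ≠ 3 by decide, show (1:Fin 4) ≠ 0 by decide, show (2:Fin 4) ≠ 0 by decide,
    show (3:Fin 4) ≠ 0 by decide]
lemma mb1 (b : Fin 4 → ℝ) : mink (bvec 1) b = -b 1 := by
  simp [mink, bvec, show (0:Fin 4) ≠ 1 by decide, show (1:Fin 4) ≠ 2 by decide,
    show (1:Fin 4) ≠ 3 by decide, show (2:Fin 4) ≠ 1 by decide, show (3:Fin 4) ≠ 1 by decide]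
lemma mb2 (b : Fin 4 → ℝ) : mink (bvec 2) b = -b 2 := by
  simp [mink, bvec, show (0:Fin 4) ≠ 2 by decide, show (1:Fin 4) ≠ 2 by decide,
    show (2:Fin 4) ≠ 3 by decide, show (3:Fin 4) ≠ 2 by decide]
lemma mb3 (b : Fin 4 → ℝ) : mink (bvec 3) b = -b 3 := by
  simp [mink, bvec, show (0:Fin 4) ≠ 3 by decide, show (1:Fin 4) ≠ 3 by decide,
    show (2:Fin 4) ≠ 3 by decide]



/-- The intertwiner identities `(p∂_e)ũ = 0` and `((ep)²□_e − κ²)ũ = 0` proved for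
Proposition 2.2. -/
theorem intertwiner_wave_equations (κ : ℝ) (hκ : 0 ≤ κ) (p w : Fin 4 → ℝ)
    (hpp : mink p p = 0) (hpw : mink p w = 0) (hww : mink w w = -κ ^ 2) :
    ∀ e : Fin 4 → ℝ, mink e p ≠ 0 →
      Dv p (fun e' => Complex.exp (-Complex.I * (mink e' w : ℝ) / (mink e' p : ℝ))) e = 0 ∧
      ((mink e p : ℝ) : ℂ) ^ 2 *
          box (fun e' => Complex.exp (-Complex.I * (mink e' w : ℝ) / (mink e' p : ℝ))) e =
        (κ : ℂ) ^ 2 *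
          Complex.exp (-Complex.I * (mink e w : ℝ) / (mink e p : ℝ)) := by
  intro e hC
  have hCc : ((mink e p : ℝ) : ℂ) ≠ 0 := Complex.ofReal_ne_zero.mpr hC
  constructor
  · rw [Dv_eq w p p e hC, hpp, hpw]
    simp
  · simp only [box]
    rw [key2 w p (bvec 0) e hC, key2 w p (bvec 1) e hC, key2 w p (bvec 2) e hC,
      key2 w p (bvec 3) e hC]
    simp only [mb0, mb1, mb2, mb3]
    have hppC : ((p 0:ℝ):ℂ) * p 0 - p 1 * p 1 - p 2 * p 2 - p 3 * p 3 = 0 := by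
      exact_mod_cast congrArg (Complex.ofReal) hpp
    have hpwC : ((p 0:ℝ):ℂ) * w 0 - p 1 * w 1 - p 2 * w 2 - p 3 * w 3 = 0 := by
      exact_mod_cast congrArg (Complex.ofReal) hpw
    have hwwC : ((w 0:ℝ):ℂ) * w 0 - w 1 * w 1 - w 2 * w 2 - w 3 * w 3 = -(κ:ℂ) ^ 2 := by
      exact_mod_cast congrArg (Complex.ofReal) hww
    set E := Complex.exp (-Complex.I * ((mink e w : ℝ) : ℂ) / ((mink e p : ℝ) : ℂ)) with hE
    set a := ((mink e w : ℝ) : ℂ) with ha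
    set c := ((mink e p : ℝ) : ℂ) with hc
    push_cast
    field_simp
    rw [← ha, ← hc]
    linear_combination (-a^2 - 2*Complex.I*a*c) * E * hppC +
      (2*a*c + 2*Complex.I*c^2) * E * hpwC + (-c^2) * E * hwwC
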